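/- Suppose n items are placed into m slots where the slot of each item is chosen i.i.d. uniformly at random among the m slots (via a balls-and-bins assignment of slot sizes followed by a uniformly random ordering of items). Then for each item e, the random variable Y_e giving the slot of e is uniform on [m], and the Y_e for distinct items are mutually independent. -/

import Mathlib

open Finset

private lemma card_filter_comp_equiv {α : Type*} [Fintype α] [DecidableEq α] (e : α ≃ α)
    (p : α → Prop) [DecidablePred p] (q : α → Prop) [DecidablePred q]
    (hpq : ∀ a, q a ↔ p (e a)) :
    (univ.filter q).card = (univ.filter p).card := by
  apply Finset.card_bij (fun a _ => e a)
  · intro a ha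
    simp only [mem_filter, mem_univ, true_and] at ha ⊢
    exact (hpq a).mp ha
  · intro a _ a' _ h
    exact e.injective h
  · intro c hc
    refine ⟨e.symm c, ?_, by simp⟩
    simp only [mem_filter, mem_univ, true_and] at hc ⊢
    exact (hpq _).mpr (by simpa using hc)

private lemma sum_fiber_card {n m : ℕ} (b : Fin n → Fin m) (p : Fin m → Prop) [DecidablePred p] :
    ∑ i ∈ univ.filter p, (univ.filter (fun l => b l = i)).card
      = (univ.filter (fun l => p (b l))).card := by
  rw [Finset.card_eq_sum_card_fiberwise (f := b) (t := univ.filter p)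
    (fun x hx => by simpa using (mem_filter.mp hx).2)]
  refine Finset.sum_congr rfl fun i hi => ?_
  simp only [mem_filter, mem_univ, true_and] at hi
  congr 1
  ext l
  simp only [mem_filter, mem_univ, true_and]
  constructor
  · intro h
    exact ⟨by rw [h]; exact hi, h⟩
  · exact And.right

private lemma bracket_unique {n m : ℕ} (b : Fin n → Fin m) (k : ℕ) {j j' : Fin m}
    (h1 : (univ.filter (fun l => b l < j)).card ≤ k)
    (h2 : k < (univ.filter (fun l => b l ≤ j)).card)
    (h1' : (univ.filter (fun l => b l < j')).card ≤ k)
    (h2' : k < (univ.filter (fun l => b l ≤ j')).card) : j = j' := by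
  rcases lt_trichotomy j j' with h | h | h
  · exfalso
    have hsub : (univ.filter (fun l => b l ≤ j)) ⊆ (univ.filter (fun l => b l < j')) := by
      intro l hl
      simp only [mem_filter, mem_univ, true_and] at hl ⊢
      exact lt_of_le_of_lt hl h
    exact absurd (h2.trans_le ((Finset.card_le_card hsub).trans h1')) (lt_irrefl k)
  · exact h
  · exfalso
    have hsub : (univ.filter (fun l => b l ≤ j')) ⊆ (univ.filter (fun l => b l < j)) := by
      intro l hl
      simp only [mem_filter, mem_univ, true_and] at hl ⊢
      exact lt_of_le_of_lt hl h
    exact absurd (h2'.trans_le ((Finset.card_le_card hsub).trans h1)) (lt_irrefl k)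

private lemma sorted_bracket {n m : ℕ} (b : Fin n → Fin m) (k : Fin n) :
    (univ.filter (fun l => b l < b (Tuple.sort b k))).card ≤ (k : ℕ) ∧
    (k : ℕ) < (univ.filter (fun l => b l ≤ b (Tuple.sort b k))).card := by
  have hmono := Tuple.monotone_sort b
  constructor
  · rw [(card_filter_comp_equiv (Tuple.sort b) (fun l => b l < b (Tuple.sort b k))
      (fun k' => b (Tuple.sort b k') < b (Tuple.sort b k)) (fun a => Iff.rfl)).symm]
    have hsub : (univ.filter (fun k' : Fin n => b (Tuple.sort b k') < b (Tuple.sort b k)))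
        ⊆ univ.filter (fun k' => k' < k) := by
      intro k' hk'
      simp only [mem_filter, mem_univ, true_and] at hk' ⊢
      by_contra hkk
      exact absurd (hmono (not_lt.mp hkk) : b (Tuple.sort b k) ≤ b (Tuple.sort b k'))
        (not_le.mpr hk')
    have hIio : (univ.filter (fun k' : Fin n => k' < k)) = Finset.Iio k := by
      ext k'; simp
    calc (univ.filter (fun k' : Fin n => b (Tuple.sort b k') < b (Tuple.sort b k))).card
        ≤ (univ.filter (fun k' : Fin n => k' < k)).card := Finset.card_le_card hsub
      _ = (k : ℕ) := by rw [hIio, Fin.card_Iio]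
  · rw [(card_filter_comp_equiv (Tuple.sort b) (fun l => b l ≤ b (Tuple.sort b k))
      (fun k' => b (Tuple.sort b k') ≤ b (Tuple.sort b k)) (fun a => Iff.rfl)).symm]
    have hsub : (univ.filter (fun k' : Fin n => k' ≤ k))
        ⊆ univ.filter (fun k' : Fin n => b (Tuple.sort b k') ≤ b (Tuple.sort b k)) := by
      intro k' hk'
      simp only [mem_filter, mem_univ, true_and] at hk' ⊢
      exact hmono hk'
    have hIic : (univ.filter (fun k' : Fin n => k' ≤ k)) = Finset.Iic k := by
      ext k'; simp
    calc (k : ℕ) < (k : ℕ) + 1 := Nat.lt_succ_self _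
      _ = (univ.filter (fun k' : Fin n => k' ≤ k)).card := by rw [hIic, Fin.card_Iic]
      _ ≤ _ := Finset.card_le_card hsub

private def Phi (n m : ℕ) :
    ((Fin n → Fin m) × Equiv.Perm (Fin n)) ≃ ((Fin n → Fin m) × Equiv.Perm (Fin n)) where
  toFun ω := (fun e => ω.1 (Tuple.sort ω.1 (ω.2.symm e)), ω.2 * (Tuple.sort ω.1)⁻¹)
  invFun ω := (ω.1 ∘ ω.2, ω.2 * Tuple.sort (ω.1 ∘ ω.2))
  left_inv := by
    rintro ⟨b, σ⟩
    have hb : ((fun e => b (Tuple.sort b (σ.symm e))) ∘ ⇑(σ * (Tuple.sort b)⁻¹)) = b := by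
      funext k
      simp
    show ((fun e => b (Tuple.sort b (σ.symm e))) ∘ ⇑(σ * (Tuple.sort b)⁻¹),
        (σ * (Tuple.sort b)⁻¹) *
          Tuple.sort ((fun e => b (Tuple.sort b (σ.symm e))) ∘ ⇑(σ * (Tuple.sort b)⁻¹))) = (b, σ)
    rw [hb, inv_mul_cancel_right]
  right_inv := by
    rintro ⟨g, τ⟩
    show ((fun e => (g ∘ ⇑τ) (Tuple.sort (g ∘ ⇑τ) ((τ * Tuple.sort (g ∘ ⇑τ)).symm e))),
        (τ * Tuple.sort (g ∘ ⇑τ)) * (Tuple.sort (g ∘ ⇑τ))⁻¹) = (g, τ)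
    rw [mul_inv_cancel_right]
    simp only [Prod.mk.injEq, and_true]
    funext e
    have h : (τ * Tuple.sort (g ∘ ⇑τ)).symm e = (Tuple.sort (g ∘ ⇑τ)).symm (τ.symm e) := rfl
    rw [h]
    simp

private lemma Phi_fst {n m : ℕ} (ω : (Fin n → Fin m) × Equiv.Perm (Fin n)) (e : Fin n) :
    ((Phi n m) ω).1 e = ω.1 (Tuple.sort ω.1 (ω.2.symm e)) := rfl

private lemma fiber_card {n m : ℕ} (e : Fin n) (j j' : Fin m) :
    (univ.filter (fun g : Fin n → Fin m => g e = j)).card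
      = (univ.filter (fun g : Fin n → Fin m => g e = j')).card := by
  apply Finset.card_bij' (fun g _ => Function.update g e j') (fun g _ => Function.update g e j)
  · intro g hg
    simp only [mem_filter, mem_univ, true_and] at hg
    simp [hg]
  · intro g hg
    simp only [mem_filter, mem_univ, true_and] at hg
    simp [hg]
  · intro g hg
    simp
  · intro g hg
    simp

private lemma fiber_mul {n m : ℕ} (e : Fin n) (j : Fin m) :
    m * (univ.filter (fun g : Fin n → Fin m => g e = j)).card = m ^ n := by
  have h : (univ : Finset (Fin n → Fin m)).card
      = ∑ j' ∈ (univ : Finset (Fin m)),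
          (univ.filter (fun g : Fin n → Fin m => g e = j')).card :=
    Finset.card_eq_sum_card_fiberwise (fun x _ => mem_univ _)
  have h2 : ∀ j' ∈ (univ : Finset (Fin m)),
      (univ.filter (fun g : Fin n → Fin m => g e = j')).card
        = (univ.filter (fun g : Fin n → Fin m => g e = j)).card :=
    fun j' _ => fiber_card e j' j
  have h3 : (univ : Finset (Fin n → Fin m)).card = m ^ n := by
    rw [card_univ]; simp [Fintype.card_fun]
  have h4 : ((univ : Finset (Fin m))).card = m := by simp
  rw [Finset.sum_congr rfl h2, Finset.sum_const, h3, h4, smul_eq_mul] at h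
  exact h.symm

/-- In the `(α,β)`-window construction, slot sizes come from throwing `n` balls
uniformly and independently into `m` bins (`b : Fin n → Fin m`), and items are
ordered by a uniformly random permutation `σ`; item `e` lands in the slot whose
block of positions contains `σ⁻¹ e`.  Then the slot `Y e` of each item is
uniform on the `m` slots, and the slots of distinct items are mutually
independent. -/
theorem slots_iid_uniform (n m : ℕ) (hn : 1 ≤ n) (hm : 1 ≤ m)
    (Y : (Fin n → Fin m) × Equiv.Perm (Fin n) → Fin n → Fin m)
    (hY : ∀ ω : (Fin n → Fin m) × Equiv.Perm (Fin n), ∀ e : Fin n,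
      (∑ i ∈ univ.filter (fun i : Fin m => i < Y ω e),
          (univ.filter (fun l : Fin n => ω.1 l = i)).card)
        ≤ ((ω.2.symm e : Fin n) : ℕ) ∧
      ((ω.2.symm e : Fin n) : ℕ) <
        ∑ i ∈ univ.filter (fun i : Fin m => i ≤ Y ω e),
          (univ.filter (fun l : Fin n => ω.1 l = i)).card) :
    (∀ e : Fin n, ∀ j : Fin m,
      ((univ.filter (fun ω : (Fin n → Fin m) × Equiv.Perm (Fin n) => Y ω e = j)).card : ℝ)
          / ((Fintype.card ((Fin n → Fin m) × Equiv.Perm (Fin n))) : ℝ)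
        = 1 / (m : ℝ)) ∧
    (∀ g : Fin n → Fin m,
      ((univ.filter (fun ω : (Fin n → Fin m) × Equiv.Perm (Fin n) =>
            ∀ e : Fin n, Y ω e = g e)).card : ℝ)
          / ((Fintype.card ((Fin n → Fin m) × Equiv.Perm (Fin n))) : ℝ)
        = ∏ e : Fin n,
            ((univ.filter (fun ω : (Fin n → Fin m) × Equiv.Perm (Fin n) =>
                Y ω e = g e)).card : ℝ)
              / ((Fintype.card ((Fin n → Fin m) × Equiv.Perm (Fin n))) : ℝ)) := by
  have hYeq : ∀ ω : (Fin n → Fin m) × Equiv.Perm (Fin n), ∀ e : Fin n,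
      Y ω e = ω.1 (Tuple.sort ω.1 (ω.2.symm e)) := by
    intro ω e
    obtain ⟨h1, h2⟩ := hY ω e
    rw [sum_fiber_card ω.1 (fun i => i < Y ω e)] at h1
    rw [sum_fiber_card ω.1 (fun i => i ≤ Y ω e)] at h2
    obtain ⟨h1', h2'⟩ := sorted_bracket ω.1 (ω.2.symm e)
    exact bracket_unique ω.1 ((ω.2.symm e : Fin n) : ℕ) h1 h2 h1' h2'
  have hPerm : Fintype.card (Equiv.Perm (Fin n)) = Nat.factorial n := by
    simp [Fintype.card_perm, Fintype.card_fin]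
  have hΩ : (Fintype.card ((Fin n → Fin m) × Equiv.Perm (Fin n))) = m ^ n * Nat.factorial n := by
    simp [Fintype.card_prod, Fintype.card_fun, hPerm]
  have hm0 : (m : ℝ) ≠ 0 := Nat.cast_ne_zero.mpr (Nat.one_le_iff_ne_zero.mp hm)
  have hfac : (Nat.factorial n : ℝ) ≠ 0 := Nat.cast_ne_zero.mpr (Nat.factorial_ne_zero n)
  have hmn : (m : ℝ) ^ n ≠ 0 := pow_ne_zero _ hm0
  have hcard1 : ∀ (e : Fin n) (j : Fin m),
      (univ.filter (fun ω : (Fin n → Fin m) × Equiv.Perm (Fin n) => Y ω e = j)).card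
        = (univ.filter (fun g : Fin n → Fin m => g e = j)).card
            * Fintype.card (Equiv.Perm (Fin n)) := by
    intro e j
    rw [card_filter_comp_equiv (Phi n m) (fun ω => ω.1 e = j) (fun ω => Y ω e = j)
      (fun ω => by show Y ω e = j ↔ ((Phi n m) ω).1 e = j; rw [hYeq ω e, ← Phi_fst ω e])]
    have hprod : (univ.filter
          (fun ω : (Fin n → Fin m) × Equiv.Perm (Fin n) => ω.1 e = j))
        = (univ.filter (fun g : Fin n → Fin m => g e = j))
            ×ˢ (univ : Finset (Equiv.Perm (Fin n))) := by
      ext ω; simp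
    rw [hprod, card_product, card_univ]
  have hcard2 : ∀ g : Fin n → Fin m,
      (univ.filter (fun ω : (Fin n → Fin m) × Equiv.Perm (Fin n) =>
          ∀ e : Fin n, Y ω e = g e)).card = Fintype.card (Equiv.Perm (Fin n)) := by
    intro g
    rw [card_filter_comp_equiv (Phi n m) (fun ω => ∀ e, ω.1 e = g e)
      (fun ω => ∀ e, Y ω e = g e)
      (fun ω => by
        show (∀ e, Y ω e = g e) ↔ (∀ e, ((Phi n m) ω).1 e = g e)
        exact forall_congr' fun e => by rw [hYeq ω e, ← Phi_fst ω e])]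
    have hprod : (univ.filter
          (fun ω : (Fin n → Fin m) × Equiv.Perm (Fin n) => ∀ e, ω.1 e = g e))
        = ({g} : Finset (Fin n → Fin m)) ×ˢ (univ : Finset (Equiv.Perm (Fin n))) := by
      ext ω
      simp only [mem_filter, mem_univ, true_and, Finset.mem_product, Finset.mem_singleton,
        and_true]
      rw [funext_iff]
    rw [hprod, card_product, card_singleton, one_mul, card_univ]
  have part1 : ∀ e : Fin n, ∀ j : Fin m,
      ((univ.filter (fun ω : (Fin n → Fin m) × Equiv.Perm (Fin n) => Y ω e = j)).card : ℝ)
          / ((Fintype.card ((Fin n → Fin m) × Equiv.Perm (Fin n))) : ℝ)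
        = 1 / (m : ℝ) := by
    intro e j
    rw [hcard1 e j, hΩ, hPerm]
    have hC := fiber_mul e j
    have hCr : (m : ℝ) * ((univ.filter (fun g : Fin n → Fin m => g e = j)).card : ℝ)
        = (m : ℝ) ^ n := by exact_mod_cast hC
    push_cast
    field_simp
    linear_combination hCr
  refine ⟨part1, fun g => ?_⟩
  rw [Finset.prod_congr rfl (fun e _ => part1 e (g e)), Finset.prod_const, card_univ,
    Fintype.card_fin, hcard2 g, hΩ, hPerm]
  push_cast
  rw [div_pow, one_pow]
  field_simp
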